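/- Let α < 0 and A antisymmetric. Suppose C is an arclength-parametrized soliton with C'' = 𝔭_{C'}((α+A)C) on which AC(s) = γ·C'(s) for a nonzero constant γ (i.e., V constant and not in ker A). Then γ² = -Ω²/α where -Ω² is the eigenvalue of A² such that A²C = γ²α C, the curve satisfies C'' = α C, ‖C(s)‖ = 1/√(-α) for all s, and C(s) = e^{(s/γ)A} C(0) is a circle of radius (-α)^{-1/2}. -/

import Mathlib

set_option maxHeartbeats 1000000
set_option synthInstance.maxHeartbeats 400000

open Matrix
open scoped RealInnerProductSpace

theorem stmt18 (n : ℕ) (α : ℝ) (hα : α < 0)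
    (A : Matrix (Fin n) (Fin n) ℝ) (hA : Aᵀ = -A)
    (C : ℝ → EuclideanSpace ℝ (Fin n)) (γ : ℝ) (hγ0 : γ ≠ 0)
    (hC : ContDiff ℝ 2 C)
    (harc : ∀ s, ‖deriv C s‖ = 1)
    (heq : ∀ s, deriv (deriv C) s
      = (α • C s + A.toEuclideanLin (C s))
        - ⟪α • C s + A.toEuclideanLin (C s), deriv C s⟫ • deriv C s)
    (hγ : ∀ s, A.toEuclideanLin (C s) = γ • deriv C s) :
    (∀ s, deriv (deriv C) s = α • C s) ∧
    (∀ s, (A * A).toEuclideanLin (C s) = (γ ^ 2 * α) • C s) ∧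
    (∀ s, ‖C s‖ = 1 / Real.sqrt (-α)) ∧
    (∀ s, C s = (NormedSpace.exp ((s / γ) • A)).toEuclideanLin (C 0)) := by
  classical
  set L : EuclideanSpace ℝ (Fin n) →L[ℝ] EuclideanSpace ℝ (Fin n) :=
    Matrix.toEuclideanCLM (𝕜 := ℝ) A with hLdef
  have hLapp : ∀ (M : Matrix (Fin n) (Fin n) ℝ) (x : EuclideanSpace ℝ (Fin n)),
      M.toEuclideanLin x = Matrix.toEuclideanCLM (𝕜 := ℝ) M x := by
    intro M x
    rw [← Matrix.coe_toEuclideanCLM_eq_toEuclideanLin]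
    rfl
  -- differentiability
  have hd1 : Differentiable ℝ C := hC.differentiable (by norm_num)
  have hd2 : Differentiable ℝ (deriv C) := by
    have h2 : ContDiff ℝ ((1 : ℕ) + 1) C := by exact_mod_cast hC
    exact ((contDiff_succ_iff_deriv.mp h2).2.2).differentiable (by norm_num)
  -- antisymmetry
  have hstar : star A = -A := by
    rw [Matrix.star_eq_conjTranspose, ← hA]
    ext i j
    simp [Matrix.conjTranspose_apply, Matrix.transpose_apply]
  have hadj : ContinuousLinearMap.adjoint L = -L := by
    rw [← ContinuousLinearMap.star_eq_adjoint, hLdef, ← map_star, hstar, map_neg]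
  have hanti : ∀ x y : EuclideanSpace ℝ (Fin n), ⟪L x, y⟫ = -⟪x, L y⟫ := by
    intro x y
    have h := ContinuousLinearMap.adjoint_inner_right (𝕜 := ℝ) L x y
    rw [hadj] at h
    simpa using h.symm
  have hLxx : ∀ x : EuclideanSpace ℝ (Fin n), ⟪L x, x⟫ = 0 := by
    intro x
    have h1 := hanti x x
    have h2 : ⟪x, L x⟫ = ⟪L x, x⟫ := real_inner_comm _ _
    linarith [h1, h2.symm ▸ h1]
  have hγ' : ∀ s, L (C s) = γ • deriv C s := by
    intro s
    rw [← hLapp]; exact hγ s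
  -- orthogonality ⟪C, C'⟫ = 0
  have hCC' : ∀ s, ⟪C s, deriv C s⟫ = 0 := by
    intro s
    have h : ⟪L (C s), C s⟫ = 0 := hLxx _
    rw [hγ' s, real_inner_smul_left] at h
    have := (mul_eq_zero.mp h).resolve_left hγ0
    rw [real_inner_comm] at this
    exact this
  have hC'C' : ∀ s, ⟪deriv C s, deriv C s⟫ = (1 : ℝ) := by
    intro s
    rw [real_inner_self_eq_norm_sq, harc s, one_pow]
  -- Part 1
  have h1 : ∀ s, deriv (deriv C) s = α • C s := by
    intro s
    have hco : ⟪α • C s + A.toEuclideanLin (C s), deriv C s⟫ = γ := by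
      rw [hγ s, inner_add_left, real_inner_smul_left, real_inner_smul_left,
        hCC' s, hC'C' s]
      ring
    rw [heq s, hco, hγ s]
    module
  -- Part 2
  have hLC' : ∀ s, L (deriv C s) = γ • (α • C s) := by
    intro s
    have hfun : (fun t => L (C t)) = fun t => γ • deriv C t := funext fun t => hγ' t
    have hdL : HasDerivAt (fun t => L (C t)) (L (deriv C s)) s :=
      L.hasFDerivAt.comp_hasDerivAt s (hd1 s).hasDerivAt
    have hdR : HasDerivAt (fun t => γ • deriv C t) (γ • deriv (deriv C) s) s :=
      ((hd2 s).hasDerivAt).const_smul γ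
    rw [hfun] at hdL
    have := hdL.unique hdR
    rw [this, h1 s]
  have h2 : ∀ s, (A * A).toEuclideanLin (C s) = (γ ^ 2 * α) • C s := by
    intro s
    rw [hLapp, _root_.map_mul]
    show (L * L) (C s) = _
    rw [ContinuousLinearMap.mul_apply, hγ' s, _root_.map_smul, hLC' s]
    rw [smul_smul, smul_smul]
    congr 1
    ring
  -- Part 3
  have hn2 : ∀ s, ⟪C s, C s⟫ = 1 / (-α) := by
    intro s
    have hder : HasDerivAt (fun t => ⟪C t, deriv C t⟫)
        (⟪C s, deriv (deriv C) s⟫ + ⟪deriv C s, deriv C s⟫) s :=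
      HasDerivAt.inner ℝ (hd1 s).hasDerivAt (hd2 s).hasDerivAt
    have hzero : (fun t => ⟪C t, deriv C t⟫) = fun _ => (0 : ℝ) := funext fun t => hCC' t
    rw [hzero] at hder
    have hz := hder.unique (hasDerivAt_const s 0)
    rw [h1 s, real_inner_smul_right, hC'C' s] at hz
    have hα' : (-α) ≠ 0 := by linarith
    field_simp at hz ⊢
    have hα0 : α ≠ 0 := ne_of_lt hα
    field_simp
    linarith
  have h3 : ∀ s, ‖C s‖ = 1 / Real.sqrt (-α) := by
    intro s
    have h := hn2 s
    rw [real_inner_self_eq_norm_sq] at h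
    have : ‖C s‖ = Real.sqrt (1 / (-α)) := by
      rw [← h, Real.sqrt_sq (norm_nonneg _)]
    rw [this, one_div, Real.sqrt_inv, one_div]
  -- Part 4
  have hcont : Continuous (Matrix.toEuclideanCLM (𝕜 := ℝ) (n := Fin n)) := by
    exact LinearMap.continuous_of_finiteDimensional
      { toFun := Matrix.toEuclideanCLM (𝕜 := ℝ) (n := Fin n),
        map_add' := fun x y => map_add _ x y,
        map_smul' := fun c x => map_smul _ c x }
  have hu : ∀ s, NormedSpace.exp ((-γ⁻¹ * s) • L) (C s) = C 0 := by
    have hderiv : ∀ s, HasDerivAt (fun t => NormedSpace.exp ((-γ⁻¹ * t) • L) (C t)) 0 s := by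
      intro s
      have hf : HasDerivAt (fun t : ℝ => -γ⁻¹ * t) (-γ⁻¹) s := by
        simpa using (hasDerivAt_id s).const_mul (-γ⁻¹)
      have hg : HasDerivAt (fun u : ℝ => NormedSpace.exp (u • L))
          (NormedSpace.exp ((-γ⁻¹ * s) • L) * L) (-γ⁻¹ * s) :=
        hasDerivAt_exp_smul_const L (-γ⁻¹ * s)
      have hB : HasDerivAt (fun t : ℝ => NormedSpace.exp ((-γ⁻¹ * t) • L))
          ((-γ⁻¹) • (NormedSpace.exp ((-γ⁻¹ * s) • L) * L)) s :=
        HasDerivAt.scomp s hg hf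
      have htot := hB.clm_apply (hd1 s).hasDerivAt
      have : ((-γ⁻¹) • (NormedSpace.exp ((-γ⁻¹ * s) • L) * L)) (C s)
          + NormedSpace.exp ((-γ⁻¹ * s) • L) (deriv C s) = 0 := by
        rw [ContinuousLinearMap.smul_apply, ContinuousLinearMap.mul_apply, hγ' s, _root_.map_smul,
          smul_smul]
        have : -γ⁻¹ * γ = -1 := by field_simp
        rw [this]
        simp
      rwa [this] at htot
    intro s
    have hdiff : Differentiable ℝ (fun t => NormedSpace.exp ((-γ⁻¹ * t) • L) (C t)) :=
      fun t => (hderiv t).differentiableAt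
    have h0 : NormedSpace.exp ((-γ⁻¹ * s) • L) (C s)
        = NormedSpace.exp ((-γ⁻¹ * 0) • L) (C 0) :=
      is_const_of_deriv_eq_zero hdiff (fun t => (hderiv t).deriv) s 0
    have hz : ((0:ℝ)) • L = 0 := zero_smul ℝ L
    rwa [mul_zero, hz, NormedSpace.exp_zero, ContinuousLinearMap.one_apply] at h0
  have h4 : ∀ s, C s = (NormedSpace.exp ((s / γ) • A)).toEuclideanLin (C 0) := by
    intro s
    have hmap : (NormedSpace.exp ((s / γ) • A)).toEuclideanLin (C 0)
        = NormedSpace.exp ((s / γ) • L) (C 0) := by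
      rw [hLapp]
      letI : SeminormedRing (Matrix (Fin n) (Fin n) ℝ) := Matrix.linftyOpSemiNormedRing
      letI : NormedRing (Matrix (Fin n) (Fin n) ℝ) := Matrix.linftyOpNormedRing
      letI : NormedAlgebra ℝ (Matrix (Fin n) (Fin n) ℝ) := Matrix.linftyOpNormedAlgebra
      letI : NormedAlgebra ℚ (Matrix (Fin n) (Fin n) ℝ) := .restrictScalars ℚ ℝ _
      erw [NormedSpace.map_exp (Matrix.toEuclideanCLM (𝕜 := ℝ) (n := Fin n)) hcont, _root_.map_smul]
    rw [hmap, ← hu s]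
    have hcomm : Commute ((s / γ) • L) ((-γ⁻¹ * s) • L) := by
      show _ * _ = _ * _
      ext x
      simp [ContinuousLinearMap.mul_apply, ContinuousLinearMap.smul_apply, _root_.map_smul]
    have hsum : (s / γ) • L + (-γ⁻¹ * s) • L = 0 := by
      have h : s / γ + -γ⁻¹ * s = 0 := by field_simp; ring
      calc (s / γ) • L + (-γ⁻¹ * s) • L = (s / γ + -γ⁻¹ * s) • L := (add_smul _ _ L).symm
        _ = 0 := by rw [h]; exact zero_smul ℝ L
    have hmul : NormedSpace.exp ((s / γ) • L) * NormedSpace.exp ((-γ⁻¹ * s) • L) = 1 := by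
      letI : NormedAlgebra ℚ (EuclideanSpace ℝ (Fin n) →L[ℝ] EuclideanSpace ℝ (Fin n)) :=
        .restrictScalars ℚ ℝ _
      rw [← NormedSpace.exp_add_of_commute hcomm, hsum, NormedSpace.exp_zero]
    calc C s = (NormedSpace.exp ((s / γ) • L) * NormedSpace.exp ((-γ⁻¹ * s) • L)) (C s) := by
            rw [hmul]; simp
      _ = NormedSpace.exp ((s / γ) • L) (NormedSpace.exp ((-γ⁻¹ * s) • L) (C s)) := by
            rw [ContinuousLinearMap.mul_apply]
  exact ⟨h1, h2, h3, h4⟩
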